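/- Let d ∈ ℕ, ℓ ≥ 0, and let G : ℝ^d → ℝ be convex with |G(M)| ≤ ℓ·‖M‖ for all M ∈ ℝ^d. Then there exist sequences (a_j)_{j ∈ ℕ} in ℝ^d and (b_j)_{j ∈ ℕ} in ℝ such that (i) G(M) = sup_{j ∈ ℕ} ( ⟨a_j, M⟩ + b_j ) for every M ∈ ℝ^d, and (ii) for every L, M ∈ ℝ^d, lim_{t → +∞} (G(L + t·M) − G(L)) / t = sup_{j ∈ ℕ} ⟨a_j, M⟩ (both sides being finite real numbers). -/

import Mathlib

open Filter
open scoped RealInnerProductSpace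

/-- For a continuous convex function on Euclidean space, at every point and accuracy
there is a global affine minorant nearly touching the function at that point. -/
lemma exists_affine_minorant {E : Type*} [NormedAddCommGroup E] [InnerProductSpace ℝ E]
    [FiniteDimensional ℝ E] (G : E → ℝ)
    (hconv : ConvexOn ℝ Set.univ G) (hGc : Continuous G)
    (x : E) {ε : ℝ} (hε : 0 < ε) :
    ∃ a b, (∀ y, ⟪a, y⟫ + b ≤ G y) ∧ G x - ε < ⟪a, x⟫ + b := by
  set T : Set (E × ℝ) := {p | G p.1 ≤ p.2} with hT
  have hTconv : Convex ℝ T := by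
    have := hconv.convex_epigraph
    simpa [hT] using this
  have hTclosed : IsClosed T := isClosed_le (hGc.comp continuous_fst) continuous_snd
  have hx : (x, G x - ε) ∉ T := by
    simp only [hT, Set.mem_setOf_eq]
    push_neg
    linarith
  obtain ⟨f, u, h1, h2⟩ := geometric_hahn_banach_point_closed hTconv hTclosed hx
  have hdecomp : ∀ (y : E) (t : ℝ), f (y, t) = f (y, 0) + t * f (0, 1) := by
    intro y t
    have hyt : ((y, t) : E × ℝ) = (y, (0:ℝ)) + t • ((0:E), (1:ℝ)) := by
      simp [Prod.ext_iff]
    rw [hyt, map_add, map_smul, smul_eq_mul]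
  set c := f ((0:E), (1:ℝ)) with hc_def
  have hmem : ∀ y, u < f (y, 0) + G y * c := by
    intro y
    have := h2 (y, G y) (by simp [hT])
    rwa [hdecomp] at this
  have h1' : f (x, 0) + (G x - ε) * c < u := by
    have := h1
    rwa [hdecomp] at this
  have hc : 0 < c := by
    have := hmem x
    nlinarith
  refine ⟨(InnerProductSpace.toDual ℝ E).symm
      ((-(1/c)) • (f.comp (ContinuousLinearMap.inl ℝ E ℝ))), u / c, ?_, ?_⟩
  · intro y
    rw [InnerProductSpace.toDual_symm_apply]
    have h := hmem y
    simp only [ContinuousLinearMap.smul_apply, ContinuousLinearMap.comp_apply,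
      ContinuousLinearMap.inl_apply, smul_eq_mul]
    rw [show -(1/c) * f (y, 0) + u / c = (u - f (y, 0))/c by ring, div_le_iff₀ hc]
    linarith
  · rw [InnerProductSpace.toDual_symm_apply]
    simp only [ContinuousLinearMap.smul_apply, ContinuousLinearMap.comp_apply,
      ContinuousLinearMap.inl_apply, smul_eq_mul]
    rw [show -(1/c) * f (x, 0) + u / c = (u - f (x, 0))/c by ring, lt_div_iff₀ hc]
    linarith

/-- Any affine minorant of a function bounded by `ℓ * ‖·‖` has slope of norm at most `ℓ`. -/
lemma norm_le_of_affine_minorant {E : Type*} [NormedAddCommGroup E] [InnerProductSpace ℝ E]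
    {ℓ : ℝ} (hℓ : 0 ≤ ℓ)
    (G : E → ℝ) (hbd : ∀ M, |G M| ≤ ℓ * ‖M‖)
    {a : E} {b : ℝ}
    (h : ∀ y, ⟪a, y⟫ + b ≤ G y) : ‖a‖ ≤ ℓ := by
  by_contra hlt
  push_neg at hlt
  have ha : 0 < ‖a‖ := lt_of_le_of_lt hℓ hlt
  set δ := ‖a‖ * (‖a‖ - ℓ) with hδ
  have hδpos : 0 < δ := mul_pos ha (by linarith)
  set t := max 0 ((1 - b)/δ) with ht
  have ht0 : 0 ≤ t := le_max_left _ _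
  have key : t * ⟪a, a⟫ + b ≤ ℓ * (t * ‖a‖) := by
    have h1 := h (t • a)
    rw [real_inner_smul_right] at h1
    have h2 : G (t • a) ≤ ℓ * ‖t • a‖ := (abs_le.mp (hbd (t • a))).2
    rw [norm_smul, Real.norm_eq_abs, abs_of_nonneg ht0] at h2
    linarith
  rw [real_inner_self_eq_norm_sq] at key
  have htd : (1 - b)/δ ≤ t := le_max_right _ _
  have : 1 - b ≤ t * δ := by
    rw [div_le_iff₀ hδpos] at htd
    linarith
  nlinarith [this, key]

theorem stmt_5 (d : ℕ) (ℓ : ℝ) (hℓ : 0 ≤ ℓ)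
    (G : EuclideanSpace ℝ (Fin d) → ℝ)
    (hconv : ConvexOn ℝ Set.univ G)
    (hbd : ∀ M, |G M| ≤ ℓ * ‖M‖) :
    ∃ (a : ℕ → EuclideanSpace ℝ (Fin d)) (b : ℕ → ℝ),
      (∀ M, G M = ⨆ j : ℕ, (⟪a j, M⟫ + b j)) ∧
      (∀ L M, Tendsto (fun t : ℝ => (G (L + t • M) - G L) / t) atTop
        (nhds (⨆ j : ℕ, ⟪a j, M⟫))) := by
  have hGc : Continuous G := by
    rw [← continuousOn_univ]
    exact hconv.continuousOn isOpen_univ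
  set u : ℕ → EuclideanSpace ℝ (Fin d) := TopologicalSpace.denseSeq _ with hu
  have hud : DenseRange u := TopologicalSpace.denseRange_denseSeq _
  have H : ∀ nk : ℕ × ℕ, ∃ a b, (∀ y, ⟪a, y⟫ + b ≤ G y) ∧
      G (u nk.1) - 1/(nk.2 + 1) < ⟪a, u nk.1⟫ + b := by
    intro nk
    exact exists_affine_minorant G hconv hGc (u nk.1) (by positivity)
  choose A B hA hB using H
  set e : ℕ × ℕ ≃ ℕ := Denumerable.eqv (ℕ × ℕ) with he
  refine ⟨fun j => A (e.symm j), fun j => B (e.symm j), ?_⟩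
  set a : ℕ → EuclideanSpace ℝ (Fin d) := fun j => A (e.symm j) with ha
  set b : ℕ → ℝ := fun j => B (e.symm j) with hb
  have hle : ∀ j y, ⟪a j, y⟫ + b j ≤ G y := fun j y => hA (e.symm j) y
  have hnorm : ∀ j, ‖a j‖ ≤ ℓ := fun j =>
    norm_le_of_affine_minorant hℓ G hbd (hA (e.symm j))
  -- Part (i)
  have hsup : ∀ M, G M = ⨆ j : ℕ, (⟪a j, M⟫ + b j) := by
    intro M
    have hbdd : BddAbove (Set.range fun j => ⟪a j, M⟫ + b j) := by
      refine ⟨G M, ?_⟩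
      rintro _ ⟨j, rfl⟩
      exact hle j M
    refine le_antisymm ?_ (ciSup_le fun j => hle j M)
    refine le_of_forall_sub_le ?_
    intro ε hε
    -- continuity at M
    obtain ⟨δ, hδ, hδ'⟩ := Metric.continuous_iff.mp hGc M (ε/3) (by positivity)
    set r := min δ (ε/(3*(ℓ+1))) with hr
    have hrpos : 0 < r := lt_min hδ (by positivity)
    obtain ⟨n, hn⟩ := hud.exists_dist_lt M hrpos
    obtain ⟨k, hk⟩ := exists_nat_one_div_lt (show (0:ℝ) < ε/3 by positivity)
    set j := e (n, k) with hj
    have heq : e.symm j = (n, k) := Equiv.symm_apply_apply _ _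
    have htouch : G (u n) - 1/(k+1) < ⟪a j, u n⟫ + b j := by
      simpa [ha, hb, heq] using hB (n, k)
    have hGclose : |G (u n) - G M| < ε/3 := by
      have := hδ' (u n) (by rw [dist_comm]; exact lt_of_lt_of_le hn (min_le_left _ _))
      rwa [Real.dist_eq] at this
    have hinner : |⟪a j, M - u n⟫| ≤ ℓ * r := by
      calc |⟪a j, M - u n⟫| ≤ ‖a j‖ * ‖M - u n‖ := abs_real_inner_le_norm _ _
        _ ≤ ℓ * r := by
            apply mul_le_mul (hnorm j) ?_ (norm_nonneg _) hℓ
            rw [← dist_eq_norm]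
            exact hn.le
    have hMsplit : ⟪a j, M⟫ = ⟪a j, u n⟫ + ⟪a j, M - u n⟫ := by
      rw [← inner_add_right]
      congr 1
      abel
    have hℓr : ℓ * r ≤ ε/3 := by
      have h1 : r ≤ ε/(3*(ℓ+1)) := min_le_right _ _
      have h2 : ℓ * r ≤ ℓ * (ε/(3*(ℓ+1))) := mul_le_mul_of_nonneg_left h1 hℓ
      have h3 : ℓ * (ε/(3*(ℓ+1))) ≤ ε/3 := by
        rw [← mul_div_assoc, div_le_div_iff₀ (by positivity) (by norm_num)]
        nlinarith
      linarith
    have hk' : (1:ℝ)/(k+1) < ε/3 := hk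
    have habs := abs_lt.mp hGclose
    have hinner' := abs_le.mp hinner
    have : G M - ε ≤ ⟪a j, M⟫ + b j := by
      rw [hMsplit]
      linarith
    exact this.trans (le_ciSup hbdd j)
  refine ⟨hsup, ?_⟩
  -- Part (ii)
  intro L M
  set S := ⨆ j : ℕ, ⟪a j, M⟫ with hS
  have hbddS : BddAbove (Set.range fun j => ⟪a j, M⟫) := by
    refine ⟨ℓ * ‖M‖, ?_⟩
    rintro _ ⟨j, rfl⟩
    calc ⟪a j, M⟫ ≤ ‖a j‖ * ‖M‖ := real_inner_le_norm _ _
      _ ≤ ℓ * ‖M‖ := mul_le_mul_of_nonneg_right (hnorm j) (norm_nonneg _)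
  have hupper : ∀ t : ℝ, 0 < t → (G (L + t • M) - G L) / t ≤ S := by
    intro t ht
    have hG : G (L + t • M) ≤ G L + t * S := by
      rw [hsup (L + t • M)]
      apply ciSup_le
      intro j
      have h1 : ⟪a j, L⟫ + b j ≤ G L := hle j L
      have h2 : ⟪a j, M⟫ ≤ S := le_ciSup hbddS j
      have h3 : ⟪a j, L + t • M⟫ = ⟪a j, L⟫ + t * ⟪a j, M⟫ := by
        rw [inner_add_right, real_inner_smul_right]
      have h4 : t * ⟪a j, M⟫ ≤ t * S := mul_le_mul_of_nonneg_left h2 ht.le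
      rw [h3]
      linarith
    rw [div_le_iff₀ ht]
    linarith [mul_comm S t]
  have hlower : ∀ (j : ℕ) (t : ℝ), 0 < t →
      ⟪a j, M⟫ + (⟪a j, L⟫ + b j - G L) / t ≤ (G (L + t • M) - G L) / t := by
    intro j t ht
    have expand : ⟪a j, M⟫ + (⟪a j, L⟫ + b j - G L) / t
        = (t * ⟪a j, M⟫ + (⟪a j, L⟫ + b j - G L)) / t := by
      field_simp
    rw [expand, div_le_div_iff₀ ht ht]
    have h1 : ⟪a j, L + t • M⟫ + b j ≤ G (L + t • M) := hle j (L + t • M)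
    rw [inner_add_right, real_inner_smul_right] at h1
    nlinarith
  rw [tendsto_order]
  constructor
  · intro c hc
    obtain ⟨j, hj⟩ := exists_lt_of_lt_ciSup hc
    have hd : Tendsto (fun t : ℝ => (⟪a j, L⟫ + b j - G L) / t) atTop (nhds 0) :=
      tendsto_const_nhds.div_atTop tendsto_id
    have hev : ∀ᶠ t : ℝ in atTop, c - ⟪a j, M⟫ < (⟪a j, L⟫ + b j - G L) / t :=
      hd.eventually (eventually_gt_nhds (by linarith))
    filter_upwards [hev, eventually_gt_atTop (0:ℝ)] with t h1 h2
    have := hlower j t h2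
    linarith
  · intro c hc
    filter_upwards [eventually_gt_atTop (0:ℝ)] with t ht
    exact lt_of_le_of_lt (hupper t ht) hc
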